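/- The derivative q' is uniformly bounded by: |q'(s)| ≤ μ·√(3A/(1 + 3aA)) for all s ∈ ℝ. -/

import Mathlib

open MeasureTheory Filter Real

set_option maxHeartbeats 1000000 in
theorem stmt_9 (a μ A : ℝ) (ha : 0 < a) (hμ : 1 / 3 < μ) (hA : 0 < A)
    (q : ℝ → ℝ) (hq : ContDiff ℝ 2 q)
    (hode : ∀ s : ℝ, deriv (deriv q) s * q s + a * s * deriv q s * q s
      + μ * q s + (1 / 3) * s * deriv q s = 0)
    (hq0 : q 0 = A) (hq0' : deriv q 0 = 0)
    (hpos : ∀ s : ℝ, 0 < q s)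
    (heven : ∀ s : ℝ, q (-s) = q s)
    (hanti : StrictAntiOn q (Set.Ioi 0))
    (hlim : Tendsto q atTop (nhds 0)) (hlim' : Tendsto (deriv q) atTop (nhds 0)) :
    ∀ s : ℝ, |deriv q s| ≤ μ * Real.sqrt (3 * A / (1 + 3 * a * A)) := by
  have hμ0 : (0:ℝ) < μ := lt_trans (by norm_num) hμ
  have hq1 : ContDiff ℝ 1 (deriv q) := by
    have hq2 : ContDiff ℝ (1 + 1) q := by
      exact hq.of_le (by norm_num)
    exact (contDiff_succ_iff_deriv.mp hq2).2.2
  have hdq : Differentiable ℝ q := hq.differentiable (by norm_num)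
  have hdq' : Differentiable ℝ (deriv q) := hq1.differentiable (by norm_num)
  have hcq' : Continuous (deriv q) := hdq'.continuous
  -- q' ≤ 0 on [0, ∞)
  have hq'le : ∀ s : ℝ, 0 ≤ s → deriv q s ≤ 0 := by
    intro s hs
    rcases eq_or_lt_of_le hs with h | h
    · rw [← h, hq0']
    · have hder := (hdq s).hasDerivAt
      rw [hasDerivAt_iff_tendsto_slope] at hder
      have h2 : Tendsto (slope q s) (nhdsWithin s (Set.Ioi s)) (nhds (deriv q s)) :=
        hder.mono_left (nhdsWithin_mono s (fun y hy =>
          Set.mem_compl_singleton_iff.mpr (ne_of_gt hy)))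
      refine le_of_tendsto h2 ?_
      filter_upwards [self_mem_nhdsWithin] with y hy
      have hlt : q y < q s := hanti h (lt_trans h hy) hy
      rw [slope_def_field]
      exact div_nonpos_of_nonpos_of_nonneg (by linarith) (by simp; linarith [hy.out])
  -- q ≤ A on [0, ∞)
  have hqA : ∀ s : ℝ, 0 ≤ s → q s ≤ A := by
    have hmono : AntitoneOn q (Set.Ici 0) := by
      apply antitoneOn_of_deriv_nonpos (convex_Ici 0) hdq.continuous.continuousOn
        hdq.differentiableOn
      intro x hx
      rw [interior_Ici] at hx
      exact hq'le x (le_of_lt hx)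
    intro s hs
    have := hmono Set.self_mem_Ici hs hs
    rwa [hq0] at this
  -- q'' ≥ -μ on [0, ∞)
  have hq'' : ∀ s : ℝ, 0 ≤ s → -μ ≤ deriv (deriv q) s := by
    intro s hs
    have hqs := hpos s
    have key : (deriv (deriv q) s + μ) * q s = (-(s * deriv q s)) * (a * q s + 1/3) := by
      linear_combination hode s
    have h2 : 0 ≤ -(s * deriv q s) := by nlinarith [hq'le s hs]
    have h3 : 0 ≤ (deriv (deriv q) s + μ) * q s := by
      rw [key]; exact mul_nonneg h2 (by nlinarith)
    nlinarith [h3, hqs]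
  -- -q' ≤ μ s on [0, ∞)
  have hkey : ∀ s : ℝ, 0 ≤ s → -(μ * s) ≤ deriv q s := by
    have hg : MonotoneOn (fun t => deriv q t + μ * t) (Set.Ici 0) := by
      apply monotoneOn_of_deriv_nonneg (convex_Ici 0)
      · exact (hcq'.add (continuous_const.mul continuous_id)).continuousOn
      · exact (hdq'.add ((differentiable_id.const_mul μ))).differentiableOn
      · intro x hx
        rw [interior_Ici] at hx
        have hmul : deriv (fun t : ℝ => μ * t) x = μ := by
          simpa using ((hasDerivAt_id x).const_mul μ).deriv
        have hd : deriv (fun t => deriv q t + μ * t) x = deriv (deriv q) x + μ := by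
          rw [deriv_fun_add (hdq' x) (by fun_prop), hmul]
        rw [hd]
        linarith [hq'' x (le_of_lt hx)]
    intro s hs
    have h := hg Set.self_mem_Ici hs hs
    simp only [hq0', mul_zero, add_zero, zero_add] at h
    linarith
  -- oddness of q'
  have hodd : ∀ s : ℝ, deriv q (-s) = - deriv q s := by
    intro s
    have hfun : (fun x => q (-x)) = q := funext heven
    have h2 := deriv_comp_neg (f := q) (x := s)
    rw [hfun] at h2
    linarith
  set C := μ * Real.sqrt (3 * A / (1 + 3 * a * A)) with hC
  have hnn : (0:ℝ) ≤ 3 * A / (1 + 3 * a * A) := by positivity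
  have hCpos : 0 < C := by
    apply mul_pos hμ0
    apply Real.sqrt_pos.mpr
    positivity
  -- main claim on [0, ∞)
  have main : ∀ t : ℝ, 0 ≤ t → -deriv q t ≤ C := by
    intro s₁ hs₁
    by_contra hcon
    push_neg at hcon
    have hs₁0 : 0 < s₁ := by
      rcases eq_or_lt_of_le hs₁ with h | h
      · exfalso; rw [← h, hq0'] at hcon; simp at hcon; linarith
      · exact h
    have hev : ∀ᶠ t in atTop, deriv q s₁ < deriv q t :=
      hlim'.eventually (eventually_gt_nhds (show deriv q s₁ < 0 by nlinarith))
    obtain ⟨T, hT⟩ := eventually_atTop.mp hev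
    set T' := max T (s₁ + 1) with hT'
    have hT'pos : 0 < T' := lt_of_lt_of_le (by linarith) (le_max_right _ _)
    have h0mem : (0:ℝ) ∈ Set.Icc 0 T' := Set.mem_Icc.mpr ⟨le_rfl, hT'pos.le⟩
    obtain ⟨s₀, hs₀mem, hs₀max⟩ := isCompact_Icc.exists_isMaxOn ⟨0, h0mem⟩
      (hcq'.neg.continuousOn : ContinuousOn (fun t => -deriv q t) (Set.Icc 0 T'))
    have hs₁mem : s₁ ∈ Set.Icc 0 T' :=
      Set.mem_Icc.mpr ⟨hs₁, le_trans (by linarith) (le_max_right _ _)⟩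
    have hM : -deriv q s₁ ≤ -deriv q s₀ := hs₀max hs₁mem
    have hCp : C < -deriv q s₀ := lt_of_lt_of_le hcon hM
    have hs₀pos : 0 < s₀ := by
      rcases eq_or_lt_of_le hs₀mem.1 with h | h
      · exfalso; rw [← h, hq0'] at hCp; simp at hCp; linarith
      · exact h
    have hs₀T : s₀ < T' := by
      rcases eq_or_lt_of_le hs₀mem.2 with h | h
      · exfalso
        have h1 : -deriv q T' < -deriv q s₁ := by
          have := hT T' (le_max_left _ _); linarith
        rw [h] at hM
        linarith
      · exact h
    have hloc : IsLocalMax (fun t => -deriv q t) s₀ :=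
      hs₀max.isLocalMax (Icc_mem_nhds hs₀pos hs₀T)
    have hderiv0 : deriv (deriv q) s₀ = 0 := by
      have h1 := hloc.deriv_eq_zero
      have h2 : deriv (fun t => -deriv q t) s₀ = -deriv (deriv q) s₀ := deriv.neg
      rw [h2] at h1
      linarith
    set p := -deriv q s₀ with hpdef
    set Q := q s₀ with hQdef
    have hQpos : 0 < Q := hpos s₀
    have hQA : Q ≤ A := hqA s₀ hs₀pos.le
    have hppos : 0 < p := lt_trans hCpos hCp
    have hp : p * (s₀ * (a * Q + 1/3)) = μ * Q := by
      linear_combination -hode s₀ + q s₀ * hderiv0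
    have hpμ : p ≤ μ * s₀ := by
      have := hkey s₀ hs₀pos.le
      simp only [hpdef]
      linarith
    -- p² (a Q + 1/3) ≤ μ² Q
    have h4 : p * (μ * Q) ≤ μ * s₀ * (μ * Q) :=
      mul_le_mul_of_nonneg_right hpμ (mul_nonneg hμ0.le hQpos.le)
    have h5 : p^2 * (a * Q + 1/3) ≤ μ^2 * Q := by
      have h4' : p^2 * (s₀ * (a * Q + 1/3)) ≤ μ^2 * Q * s₀ := by
        have : p^2 * (s₀ * (a * Q + 1/3)) = p * (μ * Q) := by
          linear_combination p * hp
        rw [this]; nlinarith [h4]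
      nlinarith [h4', hs₀pos]
    have hQ13 : (0:ℝ) < a * Q + 1/3 := by positivity
    have hμsq : (0:ℝ) < μ^2 := by positivity
    have h7 : a * p^2 < μ^2 := by
      by_contra hcontra
      push_neg at hcontra
      have hh1 : μ^2 * (a * Q + 1/3) ≤ a * p^2 * (a * Q + 1/3) :=
        mul_le_mul_of_nonneg_right hcontra hQ13.le
      have hh2 : a * (p^2 * (a * Q + 1/3)) ≤ a * (μ^2 * Q) :=
        mul_le_mul_of_nonneg_left h5 ha.le
      nlinarith [hh1, hh2, hμsq]
    have h6 : p^2 * (a * A + 1/3) ≤ μ^2 * A := by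
      have h8 : a * p^2 * (A - Q) ≤ μ^2 * (A - Q) :=
        mul_le_mul_of_nonneg_right h7.le (by linarith)
      nlinarith [h5, h8]
    have hp2 : p^2 ≤ C^2 := by
      have hden : (0:ℝ) < 1 + 3 * a * A := by positivity
      have hsq : C^2 = μ^2 * (3 * A) / (1 + 3 * a * A) := by
        rw [hC, mul_pow, Real.sq_sqrt hnn]; ring
      rw [hsq, le_div_iff₀ hden]
      calc p^2 * (1 + 3 * a * A) = 3 * (p^2 * (a * A + 1/3)) := by ring
        _ ≤ 3 * (μ^2 * A) := by linarith [h6]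
        _ = μ^2 * (3 * A) := by ring
    have hfinal : C^2 < p^2 := by
      nlinarith [mul_pos (sub_pos.mpr hCp) (show (0:ℝ) < p + C by linarith)]
    linarith [hp2, hfinal]
  -- conclude
  intro s
  rcases le_total 0 s with hs | hs
  · rw [abs_of_nonpos (hq'le s hs)]
    exact main s hs
  · have h2 : (0:ℝ) ≤ -s := by linarith
    have h3 := main (-s) h2
    rw [hodd s] at h3
    have h4 : 0 ≤ deriv q s := by
      have := hq'le (-s) h2
      rw [hodd s] at this
      linarith
    rw [abs_of_nonneg h4]
    linarith
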